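/- The K-module of syzygies of a family of monomials t₁,…,t_r — that is, the set of tuples (p₁,…,p_r) of polynomials with Σ pᵢtᵢ = 0 — is generated by the Taylor syzygies S_{ij} = (lcm(tᵢ,tⱼ)/tᵢ)·eᵢ − (lcm(tᵢ,tⱼ)/tⱼ)·eⱼ for 1 ≤ i < j ≤ r. -/

import Mathlib

open MvPolynomial

/-- The set of Taylor syzygies. -/
def taylorSet (K : Type*) [Field K] {n r : ℕ} (t : Fin r → (Fin n →₀ ℕ)) :
    Set (Fin r → MvPolynomial (Fin n) K) :=
  {s : Fin r → MvPolynomial (Fin n) K |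
    ∃ i j : Fin r, i < j ∧
      s = fun k =>
        if k = i then MvPolynomial.monomial ((t i ⊔ t j) - t i) (1 : K)
        else if k = j then -(MvPolynomial.monomial ((t i ⊔ t j) - t j) (1 : K))
        else 0}

lemma taylor_span_le {K : Type*} [Field K] {n r : ℕ} (t : Fin r → (Fin n →₀ ℕ)) :
    ∀ p ∈ Submodule.span (MvPolynomial (Fin n) K) (taylorSet K t),
      ∑ i, p i * MvPolynomial.monomial (t i) (1 : K) = 0 := by
  set R := MvPolynomial (Fin n) K
  let φ : (Fin r → R) →ₗ[R] R :=
    { toFun := fun p => ∑ i, p i * MvPolynomial.monomial (t i) (1 : K)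
      map_add' := fun p q => by simp [add_mul, Finset.sum_add_distrib]
      map_smul' := fun c p => by
        simp [Finset.mul_sum, smul_eq_mul, mul_assoc]
        exact (Finset.mul_sum _ _ _).symm }
  have h : Submodule.span R (taylorSet K t) ≤ LinearMap.ker φ := by
    rw [Submodule.span_le]
    rintro s ⟨i, j, hij, rfl⟩
    simp only [SetLike.mem_coe, LinearMap.mem_ker]
    show ∑ k, (if k = i then (monomial ((t i ⊔ t j) - t i)) (1:K)
        else if k = j then -((monomial ((t i ⊔ t j) - t j)) (1:K)) else 0)
        * MvPolynomial.monomial (t k) (1 : K) = 0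
    rw [Fintype.sum_eq_add i j hij.ne (fun k ⟨h1, h2⟩ => by simp [h1, h2])]
    rw [if_pos rfl, if_neg (show ¬ j = i from hij.ne'), if_pos rfl]
    rw [monomial_mul, neg_mul, monomial_mul, one_mul,
      tsub_add_cancel_of_le (le_sup_left : t i ≤ t i ⊔ t j),
      tsub_add_cancel_of_le (le_sup_right : t j ≤ t i ⊔ t j)]
    ring
  intro p hp
  exact h hp

lemma taylor_aux {K : Type*} [Field K] {n r : ℕ} (t : Fin r → (Fin n →₀ ℕ)) :
    ∀ N : ℕ, ∀ p : Fin r → MvPolynomial (Fin n) K,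
      (∑ i, (p i).support.card) ≤ N →
      ∑ i, p i * MvPolynomial.monomial (t i) (1 : K) = 0 →
      p ∈ Submodule.span (MvPolynomial (Fin n) K) (taylorSet K t) := by
  intro N
  induction N with
  | zero =>
    intro p hcard _
    have : p = 0 := by
      funext i
      have : (p i).support.card = 0 :=
        Nat.eq_zero_of_le_zero (le_trans (Finset.single_le_sum
          (f := fun i => (p i).support.card) (fun _ _ => Nat.zero_le _)
          (Finset.mem_univ i)) hcard)
      have := Finset.card_eq_zero.mp this
      simpa [MvPolynomial.support_eq_empty] using this
    rw [this]; exact Submodule.zero_mem _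
  | succ N ih =>
    intro p hcard hsyz
    by_cases hp0 : p = 0
    · rw [hp0]; exact Submodule.zero_mem _
    -- pick i and a monomial m in support of p i
    obtain ⟨i, hi⟩ := Function.ne_iff.mp hp0
    obtain ⟨m, hm⟩ := (MvPolynomial.support_nonempty.mpr hi : ((p i).support).Nonempty)
    set d : Fin n →₀ ℕ := m + t i with hd
    have hci : MvPolynomial.coeff m (p i) ≠ 0 := MvPolynomial.mem_support_iff.mp hm
    set c : K := MvPolynomial.coeff m (p i) with hc
    -- coefficient of d in the syzygy
    have hcoeff : ∑ k, (if t k ≤ d then MvPolynomial.coeff (d - t k) (p k) else 0) = 0 := by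
      have := congrArg (MvPolynomial.coeff d) hsyz
      simpa [MvPolynomial.coeff_sum, coeff_mul_monomial'] using this
    have hterm_i : (if t i ≤ d then MvPolynomial.coeff (d - t i) (p i) else 0) = c := by
      rw [if_pos (by simp [hd]), hd, add_tsub_cancel_right]
    -- find j ≠ i with nonzero term
    have hexj : ∃ j, j ≠ i ∧ t j ≤ d ∧ MvPolynomial.coeff (d - t j) (p j) ≠ 0 := by
      by_contra hno
      push_neg at hno
      have : ∑ k, (if t k ≤ d then MvPolynomial.coeff (d - t k) (p k) else 0) = c := by
        rw [Fintype.sum_eq_single i ?_]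
        · exact hterm_i
        · intro j hj
          by_cases h1 : t j ≤ d
          · simp only [if_pos h1]
            by_contra h2
            exact h2 (hno j hj h1)
          · simp [h1]
      exact hci (by rw [← this, hcoeff])
    obtain ⟨j, hji, htj, hcj⟩ := hexj
    set L : Fin n →₀ ℕ := t i ⊔ t j with hL
    have hLd : L ≤ d := sup_le (by simp [hd]) htj
    have htid : t i ≤ d := by simp [hd]
    -- unified generator
    set g : Fin r → MvPolynomial (Fin n) K := fun k =>
      if k = i then MvPolynomial.monomial (L - t i) (1 : K)
      else if k = j then -(MvPolynomial.monomial (L - t j) (1 : K))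
      else 0 with hg
    have hgmem : g ∈ Submodule.span (MvPolynomial (Fin n) K) (taylorSet K t) := by
      rcases lt_or_gt_of_ne hji with hlt | hlt
      · -- j < i : g = - generator (j,i)
        have hmem : (fun k =>
            if k = j then MvPolynomial.monomial ((t j ⊔ t i) - t j) (1 : K)
            else if k = i then -(MvPolynomial.monomial ((t j ⊔ t i) - t i) (1 : K))
            else 0) ∈ taylorSet K t := ⟨j, i, hlt, rfl⟩
        have := Submodule.neg_mem (Submodule.span (MvPolynomial (Fin n) K) (taylorSet K t))
          (Submodule.subset_span hmem)
        convert this using 1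
        funext k
        by_cases h1 : k = i
        · simp [hg, h1, hji, Ne.symm hji, hL, sup_comm (t i) (t j)]
        · by_cases h2 : k = j
          · simp [hg, h1, h2, hji, Ne.symm hji, hL, sup_comm (t i) (t j)]
          · simp [hg, h1, h2]
      · exact Submodule.subset_span ⟨i, j, hlt, rfl⟩
    set q : Fin r → MvPolynomial (Fin n) K :=
      (MvPolynomial.monomial (d - L) c) • g with hq
    have hqmem : q ∈ Submodule.span (MvPolynomial (Fin n) K) (taylorSet K t) :=
      Submodule.smul_mem _ _ hgmem
    -- compute q
    have hqi : q i = MvPolynomial.monomial m c := by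
      show (MvPolynomial.monomial (d - L) c) • g i = _
      rw [show g i = MvPolynomial.monomial (L - t i) (1 : K) from if_pos rfl]
      rw [smul_eq_mul, monomial_mul, mul_one,
        tsub_add_tsub_cancel hLd (le_sup_left : t i ≤ L), hd, add_tsub_cancel_right]
    have hqj : q j = -(MvPolynomial.monomial (d - t j) c) := by
      show (MvPolynomial.monomial (d - L) c) • g j = _
      rw [show g j = -(MvPolynomial.monomial (L - t j) (1 : K)) from by
        rw [show g j = if j = i then _ else if j = j then -(MvPolynomial.monomial (L - t j) (1:K)) else 0 from rfl,
          if_neg hji, if_pos rfl]]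
      rw [smul_eq_mul, mul_neg, monomial_mul, mul_one,
        tsub_add_tsub_cancel hLd (le_sup_right : t j ≤ L)]
    have hqk : ∀ k, k ≠ i → k ≠ j → q k = 0 := by
      intro k h1 h2
      simp [hq, hg, h1, h2]
    -- p' = p - q
    set p' : Fin r → MvPolynomial (Fin n) K := p - q with hp'
    have hsyz' : ∑ k, p' k * MvPolynomial.monomial (t k) (1 : K) = 0 := by
      have hq0 : ∑ k, q k * MvPolynomial.monomial (t k) (1 : K) = 0 :=
        taylor_span_le t q hqmem
      calc ∑ k, p' k * MvPolynomial.monomial (t k) (1 : K)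
          = ∑ k, (p k * MvPolynomial.monomial (t k) (1 : K)
              - q k * MvPolynomial.monomial (t k) (1 : K)) := by
            apply Finset.sum_congr rfl; intro k _; simp [hp', sub_mul]
        _ = 0 := by rw [Finset.sum_sub_distrib, hsyz, hq0, sub_zero]
    -- measure decreases
    have hcard' : (∑ k, (p' k).support.card) < ∑ k, (p k).support.card := by
      refine Finset.sum_lt_sum ?_ ⟨i, Finset.mem_univ i, ?_⟩
      · intro k _
        by_cases h1 : k = i
        · subst h1
          have hsub : (p' k).support ⊆ (p k).support.erase m := by
            intro u hu
            rw [MvPolynomial.mem_support_iff] at hu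
            simp only [hp', Pi.sub_apply, hqi, MvPolynomial.coeff_sub,
              MvPolynomial.coeff_monomial] at hu
            by_cases h2 : m = u
            · exfalso; apply hu; rw [if_pos h2, ← h2, ← hc]; ring
            · rw [if_neg h2, sub_zero] at hu
              exact Finset.mem_erase.mpr ⟨Ne.symm h2, MvPolynomial.mem_support_iff.mpr hu⟩
          exact le_trans (Finset.card_le_card hsub) (Finset.card_erase_lt_of_mem hm).le
        · by_cases h2 : k = j
          · subst h2
            have hsub : (p' k).support ⊆ (p k).support := by
              intro u hu
              rw [MvPolynomial.mem_support_iff] at hu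
              simp only [hp', Pi.sub_apply, hqj, sub_neg_eq_add, MvPolynomial.coeff_add,
                MvPolynomial.coeff_monomial] at hu
              by_cases h3 : d - t k = u
              · rw [← h3]; exact MvPolynomial.mem_support_iff.mpr hcj
              · rw [if_neg h3, add_zero] at hu
                exact MvPolynomial.mem_support_iff.mpr hu
            exact Finset.card_le_card hsub
          · have : p' k = p k := by simp [hp', hqk k h1 h2]
            rw [this]
      · have hsub : (p' i).support ⊆ (p i).support.erase m := by
          intro u hu
          rw [MvPolynomial.mem_support_iff] at hu
          simp only [hp', Pi.sub_apply, hqi, MvPolynomial.coeff_sub,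
            MvPolynomial.coeff_monomial] at hu
          by_cases h2 : m = u
          · exfalso; apply hu; rw [if_pos h2, ← h2, ← hc]; ring
          · rw [if_neg h2, sub_zero] at hu
            exact Finset.mem_erase.mpr ⟨Ne.symm h2, MvPolynomial.mem_support_iff.mpr hu⟩
        exact lt_of_le_of_lt (Finset.card_le_card hsub) (Finset.card_erase_lt_of_mem hm)
    have hcard'' : (∑ k, (p' k).support.card) ≤ N :=
      Nat.lt_succ_iff.mp (lt_of_lt_of_le hcard' hcard)
    have hp'mem := ih p' hcard'' hsyz'
    have : p = p' + q := by rw [hp']; ring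
    rw [this]
    exact Submodule.add_mem _ hp'mem hqmem

theorem stmt_6 {K : Type*} [Field K] {n r : ℕ} (t : Fin r → (Fin n →₀ ℕ)) :
    {p : Fin r → MvPolynomial (Fin n) K |
        ∑ i, p i * MvPolynomial.monomial (t i) (1 : K) = 0}
      = ↑(Submodule.span (MvPolynomial (Fin n) K)
          {s : Fin r → MvPolynomial (Fin n) K |
            ∃ i j : Fin r, i < j ∧
              s = fun k =>
                if k = i then MvPolynomial.monomial ((t i ⊔ t j) - t i) (1 : K)
                else if k = j then -(MvPolynomial.monomial ((t i ⊔ t j) - t j) (1 : K))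
                else 0}) := by
  ext p
  simp only [Set.mem_setOf_eq, SetLike.mem_coe]
  constructor
  · intro hp
    exact taylor_aux t (∑ i, (p i).support.card) p le_rfl hp
  · intro hp
    exact taylor_span_le t p hp
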